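/- arXiv:2004.13190 — 2 statements merged into one kernel-verified Lean document; each statement's English description precedes it below -/
import Mathlib

section
/- Let R be a commutative Noetherian ring of prime characteristic p > 0, let I be an ideal of R, and let s > 1 be a real number. Then for every k ∈ ℕ, the k-fold iterate of the weak s-closure operation applied to I is contained in the intersection over all real t with 1 ≤ t < s of the weak t-closure of I. In particular, the s-closure of I (the stable value of the increasing chain of iterated weak s-closures of I) is contained in ∩_{1 ≤ t < s} (weak t-closure of I). -/
open Pointwise

/-- `R°`: the set of elements of `R` not contained in any minimal prime of `R`. -/
def RCirc (R : Type*) [CommRing R] : Set R :=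
  {c | ∀ P ∈ minimalPrimes R, c ∉ P}

/-- The `q`-th Frobenius power `I^[q]` of an ideal `I`, generated by `q`-th powers
of elements of `I`. -/
def frobPow {R : Type*} [CommRing R] (I : Ideal R) (q : ℕ) : Ideal R :=
  Ideal.span ((fun f => f ^ q) '' (I : Set R))

/-- The `(s,q)` mixed power `I^(s,q) = I^⌈sq⌉ + I^[q]`. -/
noncomputable def mixedPow {R : Type*} [CommRing R] (I : Ideal R) (s : ℝ) (q : ℕ) : Ideal R :=
  I ^ ⌈s * (q : ℝ)⌉₊ + frobPow I q

/-- The weak `s`-closure of `I`: elements `x` such that there is `c ∈ R°` with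
`c·x^q ∈ I^(s,q)` for all sufficiently large powers `q = p^e` of `p`. -/
def weakCl {R : Type*} [CommRing R] (p : ℕ) (I : Ideal R) (s : ℝ) : Set R :=
  {x | ∃ c ∈ RCirc R, ∃ N : ℕ, ∀ e : ℕ, N ≤ e → c * x ^ p ^ e ∈ mixedPow I s (p ^ e)}

/-- The tight closure `I*` of `I`. -/
def tightCl {R : Type*} [CommRing R] (p : ℕ) (I : Ideal R) : Set R :=
  {x | ∃ c ∈ RCirc R, ∃ N : ℕ, ∀ e : ℕ, N ≤ e → c * x ^ p ^ e ∈ frobPow I (p ^ e)}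

/-- The integral closure of `I`: elements `x` such that there is `c ∈ R°` with
`c·x^n ∈ I^n` for all sufficiently large `n`. -/
def intCl {R : Type*} [CommRing R] (I : Ideal R) : Set R :=
  {x | ∃ c ∈ RCirc R, ∃ N : ℕ, ∀ n : ℕ, N ≤ n → c * x ^ n ∈ I ^ n}

/-- The `α`-th rational power `I_α` of `I`, for rational `α = a/b ≥ 0`:
elements `x` with `x^b` in the integral closure of `I^a`. -/
noncomputable def ratPow {R : Type*} [CommRing R] (I : Ideal R) (α : ℚ) : Set R :=
  {x | x ^ α.den ∈ intCl (I ^ α.num.toNat)}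

/-- `μ(I)`: the minimal number of generators of `I`. -/
noncomputable def mu {R : Type*} [CommRing R] (I : Ideal R) : ℕ :=
  sInf {m : ℕ | ∃ s : Finset R, s.card = m ∧ Ideal.span (s : Set R) = I}

/-- An ideal has positive height if it is not contained in any minimal prime. -/
def PosHeight {R : Type*} [CommRing R] (I : Ideal R) : Prop :=
  ∀ P ∈ minimalPrimes R, ¬ I ≤ P

section aux
variable {R : Type*} [CommRing R]

lemma one_mem_RCirc : (1 : R) ∈ RCirc R := by
  intro P hP h1
  exact hP.1.1.ne_top ((Ideal.eq_top_iff_one P).mpr h1)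

lemma mul_mem_RCirc {a b : R} (ha : a ∈ RCirc R) (hb : b ∈ RCirc R) : a * b ∈ RCirc R := by
  intro P hP hmem
  rcases hP.1.1.mem_or_mem hmem with h | h
  exacts [ha P hP h, hb P hP h]

lemma pow_mem_RCirc {a : R} (ha : a ∈ RCirc R) (n : ℕ) : a ^ n ∈ RCirc R := by
  induction n with
  | zero => simpa using one_mem_RCirc
  | succ n ih => rw [pow_succ]; exact mul_mem_RCirc ih ha

lemma pow_mem_frobPow {I : Ideal R} {f : R} (hf : f ∈ I) (q : ℕ) : f ^ q ∈ frobPow I q :=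
  Ideal.subset_span ⟨f, hf, rfl⟩

lemma frobPow_le_pow (I : Ideal R) (q : ℕ) : frobPow I q ≤ I ^ q := by
  rw [frobPow, Ideal.span_le]
  rintro _ ⟨f, hf, rfl⟩
  exact Ideal.pow_mem_pow hf q

lemma mem_mixedPow_left {I : Ideal R} {t : ℝ} {q : ℕ} {z : R} (h : z ∈ I ^ ⌈t * (q : ℝ)⌉₊) :
    z ∈ mixedPow I t q := by
  rw [mixedPow, Submodule.add_eq_sup]; exact Submodule.mem_sup_left h

lemma mem_mixedPow_right {I : Ideal R} {t : ℝ} {q : ℕ} {z : R} (h : z ∈ frobPow I q) :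
    z ∈ mixedPow I t q := by
  rw [mixedPow, Submodule.add_eq_sup]; exact Submodule.mem_sup_right h

lemma mixedPow_le_pow (I : Ideal R) {t : ℝ} (ht : 1 ≤ t) (q : ℕ) : mixedPow I t q ≤ I ^ q := by
  rw [mixedPow, Submodule.add_eq_sup]
  refine sup_le (Ideal.pow_le_pow_right ?_) (frobPow_le_pow I q)
  calc q = ⌈(q : ℝ)⌉₊ := by simp
  _ ≤ ⌈t * q⌉₊ := Nat.ceil_le_ceil (by nlinarith [Nat.cast_nonneg (α := ℝ) q])

lemma prod_mem_pow_sum (I : Ideal R) {ι : Type*} [DecidableEq ι] (S : Finset ι) (g : ι → ℕ)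
    (h : ι → R) (hh : ∀ y ∈ S, h y ∈ I ^ g y) :
    (∏ y ∈ S, h y) ∈ I ^ (∑ y ∈ S, g y) := by
  induction S using Finset.induction with
  | empty => simpa using Submodule.mem_top
  | insert _ _ hx ih =>
    rw [Finset.prod_insert hx, Finset.sum_insert hx, pow_add]
    exact Ideal.mul_mem_mul (hh _ (Finset.mem_insert_self _ _))
      (ih fun y hy => hh y (Finset.mem_insert_of_mem hy))

lemma sum_div_le {ι : Type*} (S : Finset ι) (f : ι → ℕ) (L : ℕ) :
    ∑ y ∈ S, f y / L ≤ (∑ y ∈ S, f y) / L := by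
  classical
  induction S using Finset.induction with
  | empty => simp
  | insert _ _ hx ih =>
    rw [Finset.sum_insert hx, Finset.sum_insert hx]
    exact le_trans (Nat.add_le_add_left ih _) (Nat.add_div_le_add_div _ _ _)
end aux
section aux2
variable {R : Type*} [CommRing R]
lemma block_lemma (I : Ideal R) {p : ℕ} (hp2 : 2 ≤ p) (c y : R) (N1 L : ℕ) (hL : 1 ≤ L)
    (h : ∀ e, N1 ≤ e → c * y ^ p ^ e ∈ I ^ p ^ e) (a : ℕ) :
    c ^ (L * p) * y ^ a ∈ I ^ (if L * p ^ (N1 + 1) ≤ a then a - a / L else 0) := by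
  split_ifs with hA
  · have hL0 : 0 < L := hL
    have hp1 : 1 < p := hp2
    have hn1 : p ^ (N1 + 1) ≤ a / L :=
      (Nat.le_div_iff_mul_le hL0).mpr (by rw [Nat.mul_comm]; exact hA)
    have hn0 : a / L ≠ 0 := by
      have : 0 < p ^ (N1 + 1) := Nat.pow_pos (by omega)
      omega
    obtain ⟨e, he, hq0n, hlt⟩ :
        ∃ e : ℕ, N1 ≤ e ∧ p ^ e ≤ a / L ∧ a / L < p ^ e * p := by
      refine ⟨Nat.log p (a / L), ?_, Nat.pow_log_le_self p hn0, ?_⟩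
      · have h2 : p ^ (N1 + 1) < p ^ (Nat.log p (a / L) + 1) :=
          lt_of_le_of_lt hn1 (Nat.lt_pow_succ_log_self hp1 _)
        have := (Nat.pow_lt_pow_iff_right hp1).mp h2
        omega
      · have := Nat.lt_pow_succ_log_self hp1 (a / L)
        rwa [pow_succ] at this
    set q0 := p ^ e with hq0'
    have hq00 : 0 < q0 := Nat.pow_pos (by omega)
    set u := a / q0 with hu'
    set v := a % q0 with hv'
    have ha : q0 * u + v = a := Nat.div_add_mod a q0
    have hv : v < q0 := Nat.mod_lt _ hq00
    have huL : L ≤ u := by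
      apply (Nat.le_div_iff_mul_le hq00).mpr
      have h3 : q0 * L ≤ a := (Nat.le_div_iff_mul_le hL0).mp hq0n
      rw [Nat.mul_comm]; exact h3
    have huLp : u ≤ L * p := by
      have h1 : a < q0 * p * L := (Nat.div_lt_iff_lt_mul hL0).mp hlt
      have h2 : a < L * p * q0 := by rw [show L * p * q0 = q0 * p * L by ring]; exact h1
      exact le_of_lt ((Nat.div_lt_iff_lt_mul hq00).mpr h2)
    have hmem : c * y ^ q0 ∈ I ^ q0 := h e he
    have hpow : (c * y ^ q0) ^ u ∈ I ^ (q0 * u) := by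
      have := Ideal.pow_mem_pow hmem u
      rwa [← pow_mul] at this
    have e1 : (c * y ^ q0) ^ u = c ^ u * y ^ (q0 * u) := by rw [mul_pow, ← pow_mul]
    have hid : c ^ (L * p) * y ^ a = c ^ (L * p - u) * ((c * y ^ q0) ^ u * y ^ v) := by
      calc c ^ (L * p) * y ^ a
          = (c ^ (L * p - u) * c ^ u) * (y ^ (q0 * u) * y ^ v) := by
            rw [← pow_add, ← pow_add]; congr 2 <;> omega
        _ = c ^ (L * p - u) * ((c * y ^ q0) ^ u * y ^ v) := by rw [e1]; ring
    rw [hid]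
    have hfin : c ^ (L * p - u) * ((c * y ^ q0) ^ u * y ^ v) ∈ I ^ (q0 * u) :=
      Ideal.mul_mem_left _ _ (Ideal.mul_mem_right _ _ hpow)
    refine SetLike.le_def.mp (Ideal.pow_le_pow_right ?_) hfin
    omega
  · rw [pow_zero, Ideal.one_eq_top]
    exact Submodule.mem_top
lemma pow_le_span_monomials (S : Finset R) (n : ℕ) :
    (Ideal.span (S : Set R)) ^ n ≤
      Ideal.span {z : R | ∃ a : R → ℕ, (∑ y ∈ S, a y) = n ∧ z = ∏ y ∈ S, y ^ a y} := by
  classical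
  induction n with
  | zero =>
    have h1 : (1 : R) ∈ {z : R | ∃ a : R → ℕ, (∑ y ∈ S, a y) = 0 ∧ z = ∏ y ∈ S, y ^ a y} :=
      ⟨fun _ => 0, by simp, by simp⟩
    rw [pow_zero, Ideal.one_eq_top, (Ideal.eq_top_iff_one _).mpr (Ideal.subset_span h1)]
  | succ n ih =>
    rw [pow_succ]
    calc (Ideal.span (S : Set R)) ^ n * Ideal.span (S : Set R)
        ≤ Ideal.span {z : R | ∃ a : R → ℕ, (∑ y ∈ S, a y) = n ∧ z = ∏ y ∈ S, y ^ a y} *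
          Ideal.span (S : Set R) := Ideal.mul_mono_left ih
      _ = Ideal.span ({z : R | ∃ a : R → ℕ, (∑ y ∈ S, a y) = n ∧ z = ∏ y ∈ S, y ^ a y} *
          (S : Set R)) := Ideal.span_mul_span' _ _
      _ ≤ _ := by
        apply Ideal.span_mono
        rintro z hz
        obtain ⟨m, ⟨a, hsum, rfl⟩, y, hyS, rfl⟩ := hz
        have hyS' : y ∈ S := hyS
        have h2 : ∀ z ∈ Finset.erase S y, z ^ (Function.update a y (a y + 1)) z = z ^ a z := by
          intro z hz
          rw [Function.update_of_ne (Finset.ne_of_mem_erase hz)]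
        have hprod : ∏ z ∈ S, z ^ (Function.update a y (a y + 1)) z
            = y ^ (a y + 1) * ∏ z ∈ S.erase y, z ^ a z := by
          rw [← Finset.mul_prod_erase S _ hyS', Function.update_self, Finset.prod_congr rfl h2]
        refine ⟨Function.update a y (a y + 1), ?_, ?_⟩
        · rw [Finset.sum_update_of_mem hyS', Finset.sdiff_singleton_eq_erase]
          rw [← Finset.add_sum_erase _ a hyS'] at hsum
          omega
        · rw [hprod, ← Finset.mul_prod_erase S (fun z => z ^ a z) hyS', pow_succ]
          ring

lemma pow_part (I : Ideal R) (S : Finset R) (c : R) {p : ℕ} (hp2 : 2 ≤ p) (N1 L : ℕ)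
    (hL : 1 ≤ L) (hgen : ∀ y ∈ S, ∀ e, N1 ≤ e → c * y ^ p ^ e ∈ I ^ p ^ e)
    (n : ℕ) {z : R} (hz : z ∈ (Ideal.span (S : Set R)) ^ n) :
    c ^ (L * p * S.card) * z ∈ I ^ (n - n / L - S.card * (L * p ^ (N1 + 1))) := by
  classical
  have hz' := pow_le_span_monomials S n hz
  clear hz
  induction hz' using Submodule.span_induction with
  | mem m hm =>
    obtain ⟨a, hsum, rfl⟩ := hm
    have key : ∀ y ∈ S, c ^ (L * p) * y ^ a y ∈
        I ^ (if L * p ^ (N1 + 1) ≤ a y then a y - a y / L else 0) :=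
      fun y hy => block_lemma I hp2 c y N1 L hL (hgen y hy) (a y)
    have hmem := prod_mem_pow_sum I S _ _ key
    have hre : (∏ y ∈ S, c ^ (L * p) * y ^ a y) = c ^ (L * p * S.card) * ∏ y ∈ S, y ^ a y := by
      rw [Finset.prod_mul_distrib, Finset.prod_const, ← pow_mul]
    rw [hre] at hmem
    refine SetLike.le_def.mp (Ideal.pow_le_pow_right ?_) hmem
    -- arithmetic : n - n/L - card*A ≤ ∑ g
    have pt : ∀ y ∈ S, a y ≤ (if L * p ^ (N1 + 1) ≤ a y then a y - a y / L else 0)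
        + a y / L + L * p ^ (N1 + 1) := by
      intro y _
      have h1 := Nat.div_le_self (a y) L
      generalize a y / L = k at *
      split_ifs with h <;> omega
    have hsumle : ∑ y ∈ S, a y ≤
        ∑ y ∈ S, ((if L * p ^ (N1 + 1) ≤ a y then a y - a y / L else 0)
          + a y / L + L * p ^ (N1 + 1)) := Finset.sum_le_sum pt
    rw [Finset.sum_add_distrib, Finset.sum_add_distrib, Finset.sum_const, smul_eq_mul] at hsumle
    have hdiv : ∑ y ∈ S, a y / L ≤ n / L := hsum ▸ sum_div_le S a L
    omega
  | zero => simpa using Ideal.zero_mem _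
  | add w₁ w₂ h₁ h₂ ih₁ ih₂ =>
    rw [mul_add]
    exact Ideal.add_mem _ ih₁ ih₂
  | smul r w hw ih =>
    rw [smul_eq_mul, show c ^ (L * p * S.card) * (r * w) = r * (c ^ (L * p * S.card) * w) by ring]
    exact Ideal.mul_mem_left _ _ ih

lemma frob_part {p : ℕ} (hp : p.Prime) [CharP R p] (I : Ideal R) {J : Ideal R} (S : Finset R)
    (hS : Ideal.span (S : Set R) = J) (c : R) (t : ℝ) (N1 : ℕ)
    (hgen : ∀ y ∈ S, ∀ e, N1 ≤ e → c * y ^ p ^ e ∈ mixedPow I t (p ^ e))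
    (e : ℕ) (he : N1 ≤ e) {z : R} (hz : z ∈ frobPow J (p ^ e)) :
    c * z ∈ mixedPow I t (p ^ e) := by
  haveI := Fact.mk hp
  have hq0 : p ^ e ≠ 0 := pow_ne_zero _ hp.ne_zero
  have key : ∀ f ∈ J, c * f ^ p ^ e ∈ mixedPow I t (p ^ e) := by
    intro f hf
    rw [← hS] at hf
    induction hf using Submodule.span_induction with
    | mem y hy => exact hgen y hy e he
    | zero => rw [zero_pow hq0, mul_zero]; exact Ideal.zero_mem _
    | add f g hf hg ihf ihg =>
      rw [add_pow_char_pow, mul_add]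
      exact Ideal.add_mem _ ihf ihg
    | smul r f hf ih =>
      rw [smul_eq_mul, mul_pow, show c * (r ^ p ^ e * f ^ p ^ e)
        = r ^ p ^ e * (c * f ^ p ^ e) by ring]
      exact Ideal.mul_mem_left _ _ ih
  induction hz using Submodule.span_induction with
  | mem w hw =>
    obtain ⟨f, hf, rfl⟩ := hw
    exact key f hf
  | zero => rw [mul_zero]; exact Ideal.zero_mem _
  | add w₁ w₂ h₁ h₂ ih₁ ih₂ => rw [mul_add]; exact Ideal.add_mem _ ih₁ ih₂
  | smul r w hw ih =>
    rw [smul_eq_mul, show c * (r * w) = r * (c * w) by ring]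
    exact Ideal.mul_mem_left _ _ ih
end aux2

lemma eventually_ceil {s t : ℝ} (ht1 : 1 ≤ t) (hts : t < s) {p : ℕ} (hp2 : 2 ≤ p) (C L : ℕ)
    (hL1 : 1 ≤ L) (hLb : 2 * (s + 1) / (s - t) ≤ (L : ℝ)) :
    ∃ N2 : ℕ, ∀ e : ℕ, N2 ≤ e →
      ⌈t * ((p ^ e : ℕ) : ℝ)⌉₊ + ⌈s * ((p ^ e : ℕ) : ℝ)⌉₊ / L + C ≤ ⌈s * ((p ^ e : ℕ) : ℝ)⌉₊ := by
  have hδ : (0 : ℝ) < s - t := by linarith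
  refine ⟨⌈2 * ((C : ℝ) + 1) / (s - t)⌉₊, fun e he => ?_⟩
  set q : ℕ := p ^ e with hq'
  have hqN : (⌈2 * ((C : ℝ) + 1) / (s - t)⌉₊ : ℕ) ≤ q := by
    have h1 : e < p ^ e := Nat.lt_pow_self (n := e) hp2
    omega
  have hq6 : 2 * ((C : ℝ) + 1) / (s - t) ≤ (q : ℝ) :=
    le_trans (Nat.le_ceil _) (by exact_mod_cast hqN)
  have hCq : 2 * ((C : ℝ) + 1) ≤ (s - t) * q := by
    rw [div_le_iff₀ hδ] at hq6
    linarith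
  have hq1 : (1 : ℝ) ≤ (q : ℝ) := by
    have : 0 < q := Nat.pow_pos (by omega)
    exact_mod_cast this
  have hL0 : (0 : ℝ) < (L : ℝ) := by exact_mod_cast hL1
  set n : ℕ := ⌈s * (q : ℝ)⌉₊ with hn'
  have h1 : (⌈t * (q : ℝ)⌉₊ : ℝ) < t * q + 1 := Nat.ceil_lt_add_one (by nlinarith)
  have h2 : s * (q : ℝ) ≤ (n : ℝ) := Nat.le_ceil _
  have h3 : (n : ℝ) < s * q + 1 := Nat.ceil_lt_add_one (by nlinarith)
  have h4 : ((n / L : ℕ) : ℝ) ≤ (n : ℝ) / (L : ℝ) := Nat.cast_div_le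
  have hLmul : 2 * (s + 1) ≤ (s - t) * (L : ℝ) := by
    rw [div_le_iff₀ hδ] at hLb
    linarith
  have h5 : (n : ℝ) / (L : ℝ) ≤ (s - t) * q / 2 := by
    rw [div_le_iff₀ hL0]
    have hn2 : (n : ℝ) ≤ (s + 1) * q := by nlinarith
    nlinarith [mul_le_mul_of_nonneg_left hLmul (by positivity : (0:ℝ) ≤ (q : ℝ) / 2)]
  have key : ((⌈t * (q : ℝ)⌉₊ + n / L + C : ℕ) : ℝ) ≤ (n : ℝ) := by
    push_cast
    linarith
  exact_mod_cast key

/-- for `s > 1`, every iterate of the weak `s`-closure operation applied to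
`I` (realized by a chain of ideals `F k` with `F 0 = I` and `F (k+1)` the weak `s`-closure
of `F k`) is contained in the weak `t`-closure of `I` for every real `1 ≤ t < s`; in
particular so is the `s`-closure of `I`, the stable value of this chain. -/
theorem stmt13 {R : Type*} [CommRing R] [IsNoetherianRing R]
    (p : ℕ) (hp : p.Prime) (hcp : CharP R p)
    (I : Ideal R) (s : ℝ) (hs : 1 < s)
    (F : ℕ → Ideal R) (hF0 : F 0 = I)
    (hFsucc : ∀ k : ℕ, ((F (k + 1) : Ideal R) : Set R) = weakCl p (F k) s) :
    ∀ k : ℕ, ∀ t : ℝ, 1 ≤ t → t < s → ((F k : Ideal R) : Set R) ⊆ weakCl p I t := by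
  classical
  haveI := hcp
  have hp2 : 2 ≤ p := hp.two_le
  intro k
  induction k with
  | zero =>
    intro t ht hts x hx
    rw [hF0] at hx
    exact ⟨1, one_mem_RCirc, 0, fun e _ => by
      rw [one_mul]
      exact mem_mixedPow_right (pow_mem_frobPow hx _)⟩
  | succ k ih =>
    intro t ht hts x hx
    rw [hFsucc k] at hx
    obtain ⟨c, hcR, Nx, hc⟩ := hx
    -- finite generating set of F k
    obtain ⟨S, hS⟩ : ∃ S : Finset R, Ideal.span (S : Set R) = F k := by
      have := IsNoetherian.noetherian (F k)
      exact this
    -- common multiplier for generators via induction hypothesis at level t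
    have hex : ∀ y : R, ∃ cy : R, cy ∈ RCirc R ∧ ∃ N : ℕ,
        (y ∈ F k → ∀ e, N ≤ e → cy * y ^ p ^ e ∈ mixedPow I t (p ^ e)) := by
      intro y
      by_cases hy : y ∈ F k
      · obtain ⟨cy, hcy, N, hN⟩ := ih t ht hts hy
        exact ⟨cy, hcy, N, fun _ => hN⟩
      · exact ⟨1, one_mem_RCirc, 0, fun h => absurd h hy⟩
    choose cf hcfR Nf hNf using hex
    set c' : R := ∏ y ∈ S, cf y with hc'
    set N1 : ℕ := S.sup Nf with hN1
    have hc'R : c' ∈ RCirc R :=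
      Finset.prod_induction _ _ (fun _ _ => mul_mem_RCirc) one_mem_RCirc (fun y _ => hcfR y)
    have hgen : ∀ y ∈ S, ∀ e, N1 ≤ e → c' * y ^ p ^ e ∈ mixedPow I t (p ^ e) := by
      intro y hy e he
      have hyF : y ∈ F k := by
        have : y ∈ Ideal.span (S : Set R) := Ideal.subset_span hy
        rwa [hS] at this
      have h1 := hNf y hyF e (le_trans (Finset.le_sup hy) he)
      have h2 : c' * y ^ p ^ e = (∏ z ∈ S.erase y, cf z) * (cf y * y ^ p ^ e) := by
        rw [hc', ← Finset.mul_prod_erase S cf hy]; ring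
      rw [h2]
      exact Ideal.mul_mem_left _ _ h1
    have hgenI : ∀ y ∈ S, ∀ e, N1 ≤ e → c' * y ^ p ^ e ∈ I ^ p ^ e :=
      fun y hy e he => mixedPow_le_pow I ht _ (hgen y hy e he)
    -- choice of L
    set L : ℕ := ⌈2 * (s + 1) / (s - t)⌉₊ + 1 with hL'
    have hL1 : 1 ≤ L := by omega
    have hLb : 2 * (s + 1) / (s - t) ≤ (L : ℝ) := by
      have := Nat.le_ceil (2 * (s + 1) / (s - t))
      rw [hL']
      push_cast
      linarith
    set C : ℕ := S.card * (L * p ^ (N1 + 1)) with hC'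
    obtain ⟨N2, hN2⟩ := eventually_ceil ht hts hp2 C L hL1 hLb
    set B : ℕ := L * p * S.card with hB'
    refine ⟨c' ^ B * c' * c, mul_mem_RCirc (mul_mem_RCirc (pow_mem_RCirc hc'R B) hc'R) hcR,
      max (max Nx N1) N2, fun e he => ?_⟩
    have h0 : c * x ^ p ^ e ∈ mixedPow (F k) s (p ^ e) := hc e (by omega)
    rw [mixedPow, Submodule.add_eq_sup] at h0
    obtain ⟨z1, hz1, z2, hz2, hsum⟩ := Submodule.mem_sup.mp h0
    -- power part
    have hpow : c' ^ B * z1 ∈ I ^ (⌈s * ((p ^ e : ℕ) : ℝ)⌉₊ -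
        ⌈s * ((p ^ e : ℕ) : ℝ)⌉₊ / L - C) := by
      rw [← hS] at hz1
      exact pow_part I S c' hp2 N1 L hL1 (fun y hy e' he' => hgenI y hy e' he') _ hz1
    have hexp : ⌈t * ((p ^ e : ℕ) : ℝ)⌉₊ ≤ ⌈s * ((p ^ e : ℕ) : ℝ)⌉₊ -
        ⌈s * ((p ^ e : ℕ) : ℝ)⌉₊ / L - C := by
      have := hN2 e (by omega)
      omega
    have hpow' : c' ^ B * z1 ∈ mixedPow I t (p ^ e) :=
      mem_mixedPow_left (SetLike.le_def.mp (Ideal.pow_le_pow_right hexp) hpow)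
    -- frobenius part
    have hfrob : c' * z2 ∈ mixedPow I t (p ^ e) :=
      frob_part hp I S hS c' t N1 hgen e (by omega) hz2
    -- combine
    have hid : (c' ^ B * c' * c) * x ^ p ^ e = c' * (c' ^ B * z1) + c' ^ B * (c' * z2) := by
      have : c * x ^ p ^ e = z1 + z2 := hsum.symm
      calc (c' ^ B * c' * c) * x ^ p ^ e = c' ^ B * c' * (c * x ^ p ^ e) := by ring
        _ = c' ^ B * c' * (z1 + z2) := by rw [this]
        _ = c' * (c' ^ B * z1) + c' ^ B * (c' * z2) := by ring
    rw [hid]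
    exact Ideal.add_mem _ (Ideal.mul_mem_left _ _ hpow') (Ideal.mul_mem_left _ _ hfrob)
end

section
/- Let R be a commutative Noetherian ring of prime characteristic p > 0, let I be an ideal of R, let s ≥ 1 be a real number, and let x ∈ R. Then x belongs to the weak s-closure of I if and only if for every minimal prime 𝔭 of R, the image of x in R/𝔭 belongs to the weak s-closure of the ideal I(R/𝔭). -/
open Pointwise

section AuxLemmas

variable {R : Type*} [CommRing R]

lemma frobPow_mem {I : Ideal R} {g : R} (hg : g ∈ I) (q : ℕ) : g ^ q ∈ frobPow I q :=
  Ideal.subset_span ⟨g, hg, rfl⟩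

lemma map_frobPow_le {S : Type*} [CommRing S] (f : R →+* S) (I : Ideal R) (q : ℕ) :
    (frobPow I q).map f ≤ frobPow (I.map f) q := by
  rw [frobPow, Ideal.map_span]
  refine Ideal.span_le.2 ?_
  rintro _ ⟨_, ⟨a, ha, rfl⟩, rfl⟩
  simpa [map_pow] using frobPow_mem (Ideal.mem_map_of_mem f ha) q

lemma frobPow_map_le {S : Type*} [CommRing S] {f : R →+* S} (hf : Function.Surjective f)
    (I : Ideal R) (q : ℕ) : frobPow (I.map f) q ≤ (frobPow I q).map f := by
  refine Ideal.span_le.2 ?_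
  rintro _ ⟨y, hy, rfl⟩
  obtain ⟨a, ha, rfl⟩ := (Ideal.mem_map_iff_of_surjective f hf).1 hy
  show f a ^ q ∈ Ideal.map f (frobPow I q)
  rw [← map_pow]
  exact Ideal.mem_map_of_mem f (frobPow_mem ha q)

lemma map_mixedPow_le {S : Type*} [CommRing S] (f : R →+* S) (I : Ideal R) (s : ℝ) (q : ℕ) :
    (mixedPow I s q).map f ≤ mixedPow (I.map f) s q := by
  rw [mixedPow, mixedPow, Ideal.add_eq_sup, Ideal.add_eq_sup, Ideal.map_sup, Ideal.map_pow]
  exact sup_le_sup le_rfl (map_frobPow_le f I q)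

lemma mixedPow_map_le {S : Type*} [CommRing S] {f : R →+* S} (hf : Function.Surjective f)
    (I : Ideal R) (s : ℝ) (q : ℕ) : mixedPow (I.map f) s q ≤ (mixedPow I s q).map f := by
  rw [mixedPow, mixedPow, Ideal.add_eq_sup, Ideal.add_eq_sup, Ideal.map_sup, Ideal.map_pow]
  exact sup_le_sup le_rfl (frobPow_map_le hf I q)

lemma minimalPrimes_of_isDomain {S : Type*} [CommRing S] [IsDomain S] :
    minimalPrimes S = {⊥} := by
  ext Q
  simp only [Set.mem_singleton_iff]
  constructor
  · intro hQ
    exact le_bot_iff.mp (hQ.2 ⟨Ideal.bot_prime, bot_le⟩ bot_le)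
  · rintro rfl
    exact ⟨⟨Ideal.bot_prime, le_rfl⟩, fun y _ _ => bot_le⟩

lemma pow_mem_frobPow_mul {p : ℕ} [ExpChar R p] {I : Ideal R} {b : R} {q : ℕ}
    (hb : b ∈ frobPow I q) (k : ℕ) : b ^ p ^ k ∈ frobPow I (q * p ^ k) := by
  rw [← iterateFrobenius_def]
  have h2 : (frobPow I q).map (iterateFrobenius R p k) ≤ frobPow I (q * p ^ k) := by
    rw [frobPow, Ideal.map_span]
    refine Ideal.span_le.2 ?_
    rintro _ ⟨_, ⟨g, hg, rfl⟩, rfl⟩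
    rw [iterateFrobenius_def, ← pow_mul]
    exact frobPow_mem hg _
  exact h2 (Ideal.mem_map_of_mem _ hb)

end AuxLemmas

/-- `x` belongs to the weak `s`-closure of `I` iff for every minimal prime
`𝔭` of `R`, the image of `x` in `R/𝔭` belongs to the weak `s`-closure of `I(R/𝔭)`. -/
theorem stmt14 {R : Type*} [CommRing R] [IsNoetherianRing R]
    (p : ℕ) (hp : p.Prime) (hcp : CharP R p)
    (I : Ideal R) (s : ℝ) (hs : 1 ≤ s) (x : R) :
    x ∈ weakCl p I s ↔ ∀ P ∈ minimalPrimes R,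
      Ideal.Quotient.mk P x ∈ weakCl p (I.map (Ideal.Quotient.mk P)) s := by
  haveI := hcp
  haveI : ExpChar R p := ExpChar.prime hp
  constructor
  · rintro ⟨c, hc, N, hcN⟩ P hP
    haveI : P.IsPrime := hP.1.1
    refine ⟨Ideal.Quotient.mk P c, ?_, N, fun e he => ?_⟩
    · intro Q hQ
      rw [minimalPrimes_of_isDomain, Set.mem_singleton_iff] at hQ
      subst hQ
      simp only [Ideal.mem_bot, Ideal.Quotient.eq_zero_iff_mem]
      exact hc P hP
    · rw [← map_pow, ← map_mul]
      exact map_mixedPow_le (Ideal.Quotient.mk P) I s (p ^ e)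
        (Ideal.mem_map_of_mem _ (hcN e he))
  · intro H
    classical
    by_cases hR : Subsingleton R
    · refine ⟨1, fun P hP => (hP.1.1.ne_top (Subsingleton.elim _ _)).elim, 0, fun e _ => ?_⟩
      have : (1 : R) * x ^ p ^ e = 0 := Subsingleton.elim _ _
      rw [this]
      exact (mixedPow I s (p ^ e)).zero_mem
    haveI : Nontrivial R := not_subsingleton_iff_nontrivial.mp hR
    -- Step 1: for each minimal prime, a witness modulo that prime
    have key : ∀ P : Ideal R, ∃ c : R, ∃ N : ℕ, P ∈ minimalPrimes R →
        c ∉ P ∧ ∀ e : ℕ, N ≤ e → c * x ^ p ^ e ∈ mixedPow I s (p ^ e) ⊔ P := by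
      intro P
      by_cases hP : P ∈ minimalPrimes R
      · haveI : P.IsPrime := hP.1.1
        obtain ⟨cb, hcb, N, hN⟩ := H P hP
        obtain ⟨c, rfl⟩ := Ideal.Quotient.mk_surjective cb
        refine ⟨c, N, fun _ => ⟨?_, fun e he => ?_⟩⟩
        · intro hcP
          refine hcb ⊥ ?_ ?_
          · rw [minimalPrimes_of_isDomain]; rfl
          · rwa [Ideal.mem_bot, Ideal.Quotient.eq_zero_iff_mem]
        · have h2 : Ideal.Quotient.mk P (c * x ^ p ^ e) ∈
              (mixedPow I s (p ^ e)).map (Ideal.Quotient.mk P) := by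
            rw [map_mul, map_pow]
            exact mixedPow_map_le Ideal.Quotient.mk_surjective I s (p ^ e) (hN e he)
          have h3 := Ideal.mem_comap.mpr h2
          rwa [Ideal.comap_map_of_surjective _ Ideal.Quotient.mk_surjective,
            ← RingHom.ker_eq_comap_bot, Ideal.mk_ker] at h3
      · exact ⟨0, 0, fun h => absurd h hP⟩
    choose cf Nf hf using key
    -- Step 2: elements avoiding one minimal prime, inside all others
    have Tfin := minimalPrimes.finite_of_isNoetherianRing R
    set Tf : Finset (Ideal R) := Tfin.toFinset with hTf
    have hTmem : ∀ P : Ideal R, P ∈ Tf ↔ P ∈ minimalPrimes R := fun P => Tfin.mem_toFinset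
    have dkey : ∀ P : Ideal R, ∃ d : R, P ∈ minimalPrimes R →
        d ∉ P ∧ ∀ Q ∈ minimalPrimes R, Q ≠ P → d ∈ Q := by
      intro P
      by_cases hP : P ∈ minimalPrimes R
      · haveI hPp : P.IsPrime := hP.1.1
        have hnle : ¬ (Tf.erase P).inf id ≤ P := by
          intro hle
          obtain ⟨Q, hQ, hQle⟩ := (hPp.inf_le').1 hle
          have hQmin : Q ∈ minimalPrimes R := (hTmem Q).1 (Finset.mem_of_mem_erase hQ)
          have : P ≤ Q := hP.2 ⟨hQmin.1.1, bot_le⟩ hQle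
          exact (Finset.ne_of_mem_erase hQ) (le_antisymm hQle this)
        obtain ⟨d, hd1, hd2⟩ := SetLike.not_le_iff_exists.1 hnle
        refine ⟨d, fun _ => ⟨hd2, fun Q hQ hne => ?_⟩⟩
        have : (Tf.erase P).inf id ≤ Q :=
          Finset.inf_le (Finset.mem_erase.2 ⟨hne, (hTmem Q).2 hQ⟩)
        exact this hd1
      · exact ⟨0, fun h => absurd h hP⟩
    choose df hdf using dkey
    set c : R := ∑ P ∈ Tf, df P * cf P with hc
    set N : ℕ := Tf.sup Nf with hN
    -- c is in R°
    have hcRC : c ∈ RCirc R := by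
      intro Q hQ hcQ
      haveI hQp : Q.IsPrime := hQ.1.1
      have hQT : Q ∈ Tf := (hTmem Q).2 hQ
      have hrest : ∑ P ∈ Tf.erase Q, df P * cf P ∈ Q := by
        refine Ideal.sum_mem _ fun P hP => ?_
        have hPmin : P ∈ minimalPrimes R := (hTmem P).1 (Finset.mem_of_mem_erase hP)
        have hdQ : df P ∈ Q := (hdf P hPmin).2 Q hQ (Ne.symm (Finset.ne_of_mem_erase hP))
        exact Ideal.mul_mem_right _ _ hdQ
      have hdc : df Q * cf Q ∈ Q := by
        have h4 : df Q * cf Q = (∑ P ∈ Tf, df P * cf P) - ∑ P ∈ Tf.erase Q, df P * cf P := by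
          rw [← Finset.add_sum_erase Tf (fun P => df P * cf P) hQT]; ring
        rw [h4]
        exact Q.sub_mem hcQ hrest
      rcases hQp.mem_or_mem hdc with h | h
      · exact (hdf Q hQ).1 h
      · exact (hf Q hQ).1 h
    -- Step 3: c * x^q ∈ mixedPow ⊔ nilradical for large q
    have main : ∀ e : ℕ, N ≤ e →
        c * x ^ p ^ e ∈ mixedPow I s (p ^ e) ⊔ nilradical R := by
      intro e he
      rw [hc, Finset.sum_mul]
      refine Ideal.sum_mem _ fun P hPT => ?_
      have hPmin : P ∈ minimalPrimes R := (hTmem P).1 hPT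
      have hNe : Nf P ≤ e := le_trans (Finset.le_sup hPT) he
      have hmem := (hf P hPmin).2 e hNe
      obtain ⟨m, hm, t, ht, heq⟩ := Submodule.mem_sup.1 hmem
      have hdt : df P * t ∈ nilradical R := by
        rw [nilradical_eq_sInf, Ideal.mem_sInf]
        intro J hJp
        haveI : J.IsPrime := hJp
        obtain ⟨Q, hQmin, hQle⟩ := Ideal.exists_minimalPrimes_le (bot_le : ⊥ ≤ J)
        have hQmin' : Q ∈ minimalPrimes R := hQmin
        by_cases hQP : Q = P
        · exact hQle (Ideal.mul_mem_left _ _ (hQP ▸ ht))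
        · exact hQle (Ideal.mul_mem_right _ _ ((hdf P hPmin).2 Q hQmin' hQP))
      have heq2 : df P * cf P * x ^ p ^ e = df P * m + df P * t := by
        rw [mul_assoc, ← mul_add, heq]
      rw [heq2]
      exact Submodule.add_mem _ (Submodule.mem_sup_left (Ideal.mul_mem_left _ _ hm))
        (Submodule.mem_sup_right hdt)
    -- Step 4: kill the nilradical with Frobenius
    obtain ⟨k, hk⟩ := IsNoetherianRing.isNilpotent_nilradical R
    have hkf : k ≤ p ^ k := (Nat.lt_pow_self (n := k) hp.one_lt).le
    refine ⟨c ^ p ^ k, ?_, N + k, fun e he => ?_⟩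
    · intro Q hQ hcQ
      exact hcRC Q hQ (hQ.1.1.mem_of_pow_mem _ hcQ)
    · have he' : N ≤ e - k := by omega
      have hek : e - k + k = e := by omega
      obtain ⟨m, hm, n, hn, heq⟩ := Submodule.mem_sup.1 (main (e - k) he')
      have hn0 : n ^ p ^ k = 0 := by
        have h1 : n ^ k = 0 := by
          have := Ideal.pow_mem_pow hn k
          rw [hk] at this
          simpa using this
        rw [← Nat.add_sub_cancel' hkf, pow_add, h1, zero_mul]
      have hphi : c ^ p ^ k * x ^ p ^ e = (c * x ^ p ^ (e - k)) ^ p ^ k := by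
        rw [mul_pow, ← pow_mul, ← pow_add, hek]
      rw [hphi, ← heq]
      have hadd : (m + n) ^ p ^ k = m ^ p ^ k := by
        rw [add_pow_expChar_pow, hn0, add_zero]
      rw [hadd]
      -- now m ∈ mixedPow I s (p^(e-k)), show m ^ p^k ∈ mixedPow I s (p^e)
      rw [mixedPow, Ideal.add_eq_sup] at hm
      obtain ⟨a, ha, b, hb, rfl⟩ := Submodule.mem_sup.1 hm
      have haddab : (a + b) ^ p ^ k = a ^ p ^ k + b ^ p ^ k := add_pow_expChar_pow a b p k
      rw [haddab, mixedPow, Ideal.add_eq_sup]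
      refine Submodule.add_mem _ (Submodule.mem_sup_left ?_) (Submodule.mem_sup_right ?_)
      · have h1 : a ^ p ^ k ∈ I ^ (⌈s * ((p ^ (e - k) : ℕ) : ℝ)⌉₊ * p ^ k) := by
          rw [pow_mul]
          exact Ideal.pow_mem_pow ha _
        refine Ideal.pow_le_pow_right ?_ h1
        rw [Nat.ceil_le]
        push_cast
        calc s * (p : ℝ) ^ e = s * (p : ℝ) ^ (e - k) * (p : ℝ) ^ k := by
              rw [mul_assoc, ← pow_add, hek]
          _ ≤ (⌈s * ((p : ℝ) ^ (e - k))⌉₊ : ℝ) * (p : ℝ) ^ k :=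
              mul_le_mul_of_nonneg_right (Nat.le_ceil _) (by positivity)
      · have := pow_mem_frobPow_mul hb k (p := p)
        rwa [← pow_add, hek] at this
end
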